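/- Let E be a nonempty compact subset of ℝ² and let C be the boundary circle of its circumscribed (minimal enclosing) disk, with center c and radius R > 0. Then C ∩ E is not contained in any open semicircle of C; that is, there is no unit vector u such that every point p ∈ C ∩ E satisfies ⟨p - c, u⟩ > 0. -/

import Mathlib

/-- If a nonempty compact set with minimal enclosing radius `R` lies in an
open ball of radius `R`, we get a contradiction. -/
lemma aux_ball_contra
    (E : Set (EuclideanSpace ℝ (Fin 2))) (hne : E.Nonempty) (hE : IsCompact E)
    (R : ℝ)
    (hmin : ∀ (c' : EuclideanSpace ℝ (Fin 2)) (R' : ℝ),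
      E ⊆ Metric.closedBall c' R' → R ≤ R')
    (c' : EuclideanSpace ℝ (Fin 2)) (hball : E ⊆ Metric.ball c' R) : False := by
  obtain ⟨p₀, hp₀E, hmax⟩ := hE.exists_isMaxOn hne
    ((continuous_id.dist continuous_const).continuousOn :
      ContinuousOn (fun p => dist p c') E)
  have hsub' : E ⊆ Metric.closedBall c' (dist p₀ c') := fun p hp =>
    Metric.mem_closedBall.mpr (isMaxOn_iff.mp hmax p hp)
  have h1 : R ≤ dist p₀ c' := hmin c' _ hsub'
  have h2 : dist p₀ c' < R := Metric.mem_ball.mp (hball hp₀E)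
  linarith

theorem circumscribed_intersection_not_in_open_semicircle
    (E : Set (EuclideanSpace ℝ (Fin 2))) (hne : E.Nonempty) (hE : IsCompact E)
    (c : EuclideanSpace ℝ (Fin 2)) (R : ℝ) (hR : 0 < R)
    (hsub : E ⊆ Metric.closedBall c R)
    (hmin : ∀ (c' : EuclideanSpace ℝ (Fin 2)) (R' : ℝ),
      E ⊆ Metric.closedBall c' R' → R ≤ R') :
    ¬ ∃ u : EuclideanSpace ℝ (Fin 2), ‖u‖ = 1 ∧
        ∀ p ∈ Metric.sphere c R ∩ E, (0:ℝ) < inner ℝ (p - c) u := by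
  rintro ⟨u, hu, hsemi⟩
  set f : EuclideanSpace ℝ (Fin 2) → ℝ := fun p => inner ℝ (p - c) u with hf
  have fcont : Continuous f :=
    (continuous_id.sub continuous_const).inner continuous_const
  by_cases hS : (Metric.sphere c R ∩ E).Nonempty
  · -- get minimum of f on the sphere-intersection
    have hScomp : IsCompact (Metric.sphere c R ∩ E) :=
      hE.inter_left Metric.isClosed_sphere
    obtain ⟨q, hq, hqmin'⟩ := hScomp.exists_isMinOn hS fcont.continuousOn
    have hqmin := isMinOn_iff.mp hqmin'
    set δ : ℝ := f q with hδ
    have hδpos : 0 < δ := hsemi q hq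
    -- B : points of E with small f
    set B : Set (EuclideanSpace ℝ (Fin 2)) := E ∩ {p | f p ≤ δ / 2} with hB
    have hBcomp : IsCompact B :=
      hE.inter_right (isClosed_le fcont continuous_const)
    have hBlt : ∀ p ∈ B, dist p c < R := by
      intro p hp
      rcases lt_or_eq_of_le (Metric.mem_closedBall.mp (hsub hp.1)) with h | h
      · exact h
      · have : p ∈ Metric.sphere c R ∩ E := ⟨Metric.mem_sphere.mpr h, hp.1⟩
        have := hqmin p this
        have := hp.2
        simp only [Set.mem_setOf_eq] at this
        linarith
    obtain ⟨r₀, hr₀R, hr₀⟩ : ∃ r₀, r₀ < R ∧ ∀ p ∈ B, dist p c ≤ r₀ := by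
      rcases B.eq_empty_or_nonempty with hBe | hBne
      · exact ⟨R / 2, by linarith, by simp [hBe]⟩
      · obtain ⟨p₁, hp₁, hp₁max⟩ := hBcomp.exists_isMaxOn hBne
          ((continuous_id.dist continuous_const).continuousOn :
            ContinuousOn (fun p => dist p c) B)
        exact ⟨dist p₁ c, hBlt p₁ hp₁, isMaxOn_iff.mp hp₁max⟩
    -- choose ε
    set ε : ℝ := min (δ / 2) ((R - r₀) / 2) with hε
    have hεpos : 0 < ε := lt_min (by linarith) (by linarith)
    have hεδ : ε < δ := lt_of_le_of_lt (min_le_left _ _) (by linarith)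
    have hεr : ε < R - r₀ := lt_of_le_of_lt (min_le_right _ _) (by linarith)
    set c' := c + ε • u with hc'
    have hdistcc' : dist c c' = ε := by
      rw [hc', dist_eq_norm]
      simp [norm_smul, abs_of_pos hεpos, hu]
    apply aux_ball_contra E hne hE R hmin c'
    intro p hp
    rw [Metric.mem_ball]
    by_cases hfp : f p ≤ δ / 2
    · calc dist p c' ≤ dist p c + dist c c' := dist_triangle _ _ _
        _ ≤ r₀ + ε := by
            have := hr₀ p ⟨hp, hfp⟩
            rw [hdistcc']; linarith
        _ < R := by linarith
    · push_neg at hfp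
      have hkey : dist p c' ^ 2 < R ^ 2 := by
        have hexp : dist p c' ^ 2
            = ‖p - c‖ ^ 2 - 2 * (ε * f p) + ε ^ 2 := by
          rw [dist_eq_norm, hc']
          have : p - (c + ε • u) = (p - c) - ε • u := by abel
          rw [this, @norm_sub_sq_real, real_inner_smul_right, norm_smul, hu,
            Real.norm_eq_abs, abs_of_pos hεpos]
          simp only [hf]
          ring
        have hpc : ‖p - c‖ ≤ R := by
          rw [← dist_eq_norm]; exact Metric.mem_closedBall.mp (hsub hp)
        have hpc2 : ‖p - c‖ ^ 2 ≤ R ^ 2 :=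
          pow_le_pow_left₀ (norm_nonneg _) hpc 2
        have h1 : ε * (δ / 2) ≤ ε * f p :=
          mul_le_mul_of_nonneg_left (le_of_lt hfp) (le_of_lt hεpos)
        have h2 : ε ^ 2 < ε * δ := by
          have := mul_lt_mul_of_pos_left hεδ hεpos
          nlinarith
        nlinarith
      exact lt_of_pow_lt_pow_left₀ 2 (le_of_lt hR) hkey
  · -- sphere ∩ E empty: E ⊆ ball c R
    apply aux_ball_contra E hne hE R hmin c
    intro p hp
    rw [Metric.mem_ball]
    rcases lt_or_eq_of_le (Metric.mem_closedBall.mp (hsub hp)) with h | h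
    · exact h
    · exact absurd ⟨p, Metric.mem_sphere.mpr h, hp⟩ hS
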